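/- For real q > 0, with ρ(u) = (-qu + √(q²u² + 8))/4 and f(u) = ρ(1)/ρ(u), one has f''(1) + f'(1) - (f'(1))² = 8q/(8 + q²)^(3/2), and in particular this quantity is strictly positive. -/

import Mathlib

private lemma sqrt_hda (q u : ℝ) : HasDerivAt (fun u : ℝ => Real.sqrt (q ^ 2 * u ^ 2 + 8))
    (q ^ 2 * u / Real.sqrt (q ^ 2 * u ^ 2 + 8)) u := by
  have hpos : (0:ℝ) < q ^ 2 * u ^ 2 + 8 := by positivity
  have h1 : HasDerivAt (fun u : ℝ => q ^ 2 * u ^ 2 + 8) (q ^ 2 * (2 * u)) u := by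
    simpa using ((hasDerivAt_pow 2 u).const_mul (q ^ 2)).add_const 8
  have h2 : HasDerivAt (fun u : ℝ => Real.sqrt (q ^ 2 * u ^ 2 + 8))
      (1 / (2 * Real.sqrt (q ^ 2 * u ^ 2 + 8)) * (q ^ 2 * (2 * u))) u :=
    (Real.hasDerivAt_sqrt hpos.ne').comp u h1
  convert h2 using 1
  have hs : Real.sqrt (q ^ 2 * u ^ 2 + 8) ≠ 0 := (Real.sqrt_pos.2 hpos).ne'
  field_simp

private lemma rho_hda (q u : ℝ) :
    HasDerivAt (fun u : ℝ => (-q * u + Real.sqrt (q ^ 2 * u ^ 2 + 8)) / 4)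
      ((-q + q ^ 2 * u / Real.sqrt (q ^ 2 * u ^ 2 + 8)) / 4) u := by
  have := (((hasDerivAt_id u).const_mul (-q)).add (sqrt_hda q u)).div_const 4
  simpa using this

private lemma rho_pos (q u : ℝ) : 0 < (-q * u + Real.sqrt (q ^ 2 * u ^ 2 + 8)) / 4 := by
  have hpos : (0:ℝ) < q ^ 2 * u ^ 2 + 8 := by positivity
  have h1 : 0 ≤ Real.sqrt (q ^ 2 * u ^ 2 + 8) := Real.sqrt_nonneg _
  have h2 : (Real.sqrt (q ^ 2 * u ^ 2 + 8)) ^ 2 = q ^ 2 * u ^ 2 + 8 := Real.sq_sqrt hpos.le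
  nlinarith [sq_nonneg (q * u + Real.sqrt (q ^ 2 * u ^ 2 + 8))]

theorem variance_constant_231 (q : ℝ) (hq : 0 < q) :
    let f : ℝ → ℝ := fun u =>
      ((-q * 1 + Real.sqrt (q ^ 2 * 1 ^ 2 + 8)) / 4)
        / ((-q * u + Real.sqrt (q ^ 2 * u ^ 2 + 8)) / 4)
    deriv (deriv f) 1 + deriv f 1 - (deriv f 1) ^ 2 = 8 * q / (8 + q ^ 2) ^ ((3 : ℝ) / 2)
    ∧ 0 < 8 * q / (8 + q ^ 2) ^ ((3 : ℝ) / 2) := by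
  intro f
  set C : ℝ := (-q * 1 + Real.sqrt (q ^ 2 * 1 ^ 2 + 8)) / 4 with hC
  have hf1 : ∀ u : ℝ, HasDerivAt f
      ((0 * ((-q * u + Real.sqrt (q ^ 2 * u ^ 2 + 8)) / 4)
        - C * ((-q + q ^ 2 * u / Real.sqrt (q ^ 2 * u ^ 2 + 8)) / 4))
        / ((-q * u + Real.sqrt (q ^ 2 * u ^ 2 + 8)) / 4) ^ 2) u := by
    intro u
    exact (hasDerivAt_const u C).div (rho_hda q u) (rho_pos q u).ne'
  have hdf : deriv f = fun u =>
      (0 * ((-q * u + Real.sqrt (q ^ 2 * u ^ 2 + 8)) / 4)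
        - C * ((-q + q ^ 2 * u / Real.sqrt (q ^ 2 * u ^ 2 + 8)) / 4))
        / ((-q * u + Real.sqrt (q ^ 2 * u ^ 2 + 8)) / 4) ^ 2 :=
    funext fun u => (hf1 u).deriv
  set S : ℝ := Real.sqrt (q ^ 2 * 1 ^ 2 + 8) with hSdef
  have hSpos : 0 < S := Real.sqrt_pos.2 (by positivity)
  have hS2 : S ^ 2 = q ^ 2 * 1 ^ 2 + 8 := Real.sq_sqrt (by positivity)
  have hqS : q < S := by
    have h : q ^ 2 < S ^ 2 := by nlinarith
    exact lt_of_pow_lt_pow_left₀ 2 hSpos.le h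
  have hρ1pos : (0:ℝ) < (-q * 1 + S) / 4 := by linarith
  have hquot : HasDerivAt (fun u : ℝ => q ^ 2 * u / Real.sqrt (q ^ 2 * u ^ 2 + 8))
      ((q ^ 2 * S - q ^ 2 * 1 * (q ^ 2 * 1 / S)) / S ^ 2) 1 := by
    have hnum : HasDerivAt (fun u : ℝ => q ^ 2 * u) (q ^ 2) 1 := by
      simpa using (hasDerivAt_id (1:ℝ)).const_mul (q ^ 2)
    exact hnum.div (sqrt_hda q 1) hSpos.ne'
  have hN : HasDerivAt (fun u : ℝ =>
      0 * ((-q * u + Real.sqrt (q ^ 2 * u ^ 2 + 8)) / 4)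
        - C * ((-q + q ^ 2 * u / Real.sqrt (q ^ 2 * u ^ 2 + 8)) / 4))
      (0 * ((-q + q ^ 2 * 1 / S) / 4)
        - C * ((0 + (q ^ 2 * S - q ^ 2 * 1 * (q ^ 2 * 1 / S)) / S ^ 2) / 4)) 1 :=
    ((rho_hda q 1).const_mul 0).sub
      ((((hasDerivAt_const (1:ℝ) (-q)).add hquot).div_const 4).const_mul C)
  have hD : HasDerivAt (fun u : ℝ => ((-q * u + Real.sqrt (q ^ 2 * u ^ 2 + 8)) / 4) ^ 2)
      ((2:ℕ) * ((-q * 1 + S) / 4) ^ 1 * ((-q + q ^ 2 * 1 / S) / 4)) 1 :=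
    (rho_hda q 1).pow 2
  have hDne : ((-q * 1 + S) / 4) ^ 2 ≠ 0 := pow_ne_zero _ hρ1pos.ne'
  have hd2 : HasDerivAt (deriv f)
      (((0 * ((-q + q ^ 2 * 1 / S) / 4)
          - C * ((0 + (q ^ 2 * S - q ^ 2 * 1 * (q ^ 2 * 1 / S)) / S ^ 2) / 4))
          * ((-q * 1 + S) / 4) ^ 2
        - (0 * ((-q * 1 + S) / 4) - C * ((-q + q ^ 2 * 1 / S) / 4))
          * ((2:ℕ) * ((-q * 1 + S) / 4) ^ 1 * ((-q + q ^ 2 * 1 / S) / 4)))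
        / (((-q * 1 + S) / 4) ^ 2) ^ 2) 1 := by
    rw [hdf]
    exact hN.div hD hDne
  have hSm : (0:ℝ) < -q * 1 + S := by linarith
  have hCval : C = (-q * 1 + S) / 4 := by rw [hC, hSdef]
  have hS2' : S ^ 2 = q ^ 2 + 8 := by rw [hS2]; ring
  have hXne : ((-q * 1 + S) / 4) ≠ 0 := hρ1pos.ne'
  -- closed forms
  have e1 : deriv f 1 = q / S := by
    rw [hdf]
    simp only
    rw [← hSdef, hCval]
    rw [div_eq_div_iff (pow_ne_zero 2 hXne) hSpos.ne']
    field_simp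
    ring
  have e2 : deriv (deriv f) 1 = (q ^ 2 * S - q ^ 3) / S ^ 3 := by
    rw [hd2.deriv, hCval]
    rw [div_eq_div_iff (pow_ne_zero 2 (pow_ne_zero 2 hXne)) (pow_ne_zero 3 hSpos.ne')]
    field_simp
    ring
  have hrpow : (8 + q ^ 2) ^ ((3 : ℝ) / 2) = S ^ 3 := by
    have h8 : (8 + q ^ 2 : ℝ) = S ^ 2 := by rw [hS2]; ring
    rw [h8, ← Real.rpow_natCast S 2, ← Real.rpow_mul hSpos.le, ← Real.rpow_natCast S 3]
    norm_num
  constructor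
  · rw [e1, e2, hrpow]
    field_simp
    linear_combination hS2'
  · have h3 : (0:ℝ) < S ^ 3 := by positivity
    rw [hrpow]
    positivity
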